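/- Let A be an associative unital algebra over ℂ, ℏ a nonzero complex number, and u, v, ϖ ∈ A elements satisfying u∗v − v∗u = −iℏ·1, v∗ϖ = 0, ϖ∗u = 0, and ϖ∗ϖ = ϖ. Then for all natural numbers p, q, r, s: (u^p ∗ ϖ ∗ v^q) ∗ (u^r ∗ ϖ ∗ v^s) = 0 if q ≠ r, and (u^p ∗ ϖ ∗ v^q) ∗ (u^q ∗ ϖ ∗ v^s) = q!·(iℏ)^q · (u^p ∗ ϖ ∗ v^s). In particular the normalized elements E_{p,q} = (p! q! (iℏ)^{p+q})^{−1/2} u^p ∗ ϖ ∗ v^q satisfy the matrix-unit law E_{p,q} ∗ E_{r,s} = δ_{q,r} E_{p,s}. -/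

import Mathlib

/-- In any associative unital ℂ-algebra with `u∗v − v∗u = −iℏ·1` (`ℏ ≠ 0`) and an abstract
vacuum `ϖ` (idempotent, `v∗ϖ = 0`, `ϖ∗u = 0`):
`(u^p∗ϖ∗v^q)∗(u^r∗ϖ∗v^s) = 0` if `q ≠ r`, and
`(u^p∗ϖ∗v^q)∗(u^q∗ϖ∗v^s) = q!(iℏ)^q·(u^p∗ϖ∗v^s)`; in particular, for any choice of
square roots `n_k` with `n_k² = k!(iℏ)^k`, the normalized elements
`E_{p,q} = (n_p n_q)⁻¹ u^p∗ϖ∗v^q` satisfy the matrix-unit law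
`E_{p,q}∗E_{r,s} = δ_{q,r} E_{p,s}`. -/
theorem statement12 (A : Type*) [Ring A] [Algebra ℂ A] (ℏ : ℂ) (hℏ : ℏ ≠ 0)
    (u v ϖ : A) (weyl : u * v - v * u = -(Complex.I * ℏ) • (1 : A))
    (hv : v * ϖ = 0) (hu : ϖ * u = 0) (hidem : ϖ * ϖ = ϖ)
    (nrm : ℕ → ℂ) (hnrm : ∀ k : ℕ, (nrm k) ^ 2 = (k.factorial : ℂ) * (Complex.I * ℏ) ^ k)
    (E : ℕ → ℕ → A)
    (hE : ∀ p q : ℕ, E p q = ((nrm p * nrm q)⁻¹ : ℂ) • (u ^ p * ϖ * v ^ q)) :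
    (∀ p q r s : ℕ, q ≠ r → (u ^ p * ϖ * v ^ q) * (u ^ r * ϖ * v ^ s) = 0) ∧
    (∀ p q s : ℕ, (u ^ p * ϖ * v ^ q) * (u ^ q * ϖ * v ^ s) =
      ((q.factorial : ℂ) * (Complex.I * ℏ) ^ q) • (u ^ p * ϖ * v ^ s)) ∧
    (∀ p q r s : ℕ, E p q * E r s = if q = r then E p s else 0) := by
  set c : ℂ := Complex.I * ℏ with hcdef
  have hc0 : c ≠ 0 := mul_ne_zero Complex.I_ne_zero hℏ
  have hvu : v * u = u * v + c • (1 : A) := by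
    rw [sub_eq_iff_eq_add] at weyl
    rw [weyl]; module
  have hvun : ∀ r : ℕ, v * u ^ (r + 1) =
      u ^ (r + 1) * v + (((r : ℂ) + 1) * c) • u ^ r := by
    intro r
    induction r with
    | zero => simpa using hvu
    | succ t ih =>
      have : v * u ^ (t + 2) = (v * u ^ (t + 1)) * u := by
        rw [pow_succ, ← mul_assoc]
      rw [this, ih, add_mul, smul_mul_assoc, mul_assoc, hvu, mul_add,
        mul_smul_comm, mul_one, ← mul_assoc]
      simp only [← pow_succ]
      push_cast
      module
  have key : ∀ q r : ℕ, ϖ * v ^ q * (u ^ r * ϖ) =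
      (if q = r then (q.factorial : ℂ) * c ^ q else 0) • ϖ := by
    intro q
    induction q with
    | zero =>
      intro r
      match r with
      | 0 => simp [hidem]
      | t + 1 =>
        rw [pow_succ']
        have : ϖ * v ^ 0 * (u * u ^ t * ϖ) = (ϖ * u) * (u ^ t * ϖ) := by
          simp [mul_assoc]
        rw [this, hu]
        simp
    | succ q ih =>
      intro r
      match r with
      | 0 =>
        have : ϖ * v ^ (q + 1) * (u ^ 0 * ϖ) = (ϖ * v ^ q) * (v * ϖ) := by
          rw [pow_succ]; simp [mul_assoc]
        rw [this, hv]
        simp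
      | t + 1 =>
        have h1 : ϖ * v ^ (q + 1) * (u ^ (t + 1) * ϖ) =
            ϖ * v ^ q * ((v * u ^ (t + 1)) * ϖ) := by
          rw [pow_succ]; simp [mul_assoc]
        rw [h1, hvun t]
        have ih' : ϖ * (v ^ q * (u ^ t * ϖ)) =
            (if q = t then (q.factorial : ℂ) * c ^ q else 0) • ϖ := by
          rw [← mul_assoc]; exact ih t
        simp only [add_mul, smul_mul_assoc, mul_add, mul_assoc, hv, mul_zero,
          zero_add, mul_smul_comm, ih', smul_smul]
        by_cases hqt : q = t
        · subst hqt
          rw [if_pos rfl, if_pos rfl]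
          congr 1
          push_cast [Nat.factorial_succ]
          ring
        · rw [if_neg hqt, if_neg (by omega : ¬ (q + 1 = t + 1))]
          simp
  have prod : ∀ p q r s : ℕ, (u ^ p * ϖ * v ^ q) * (u ^ r * ϖ * v ^ s) =
      (if q = r then (q.factorial : ℂ) * c ^ q else 0) • (u ^ p * ϖ * v ^ s) := by
    intro p q r s
    have : (u ^ p * ϖ * v ^ q) * (u ^ r * ϖ * v ^ s) =
        u ^ p * (ϖ * v ^ q * (u ^ r * ϖ)) * v ^ s := by
      simp [mul_assoc]
    rw [this, key q r]
    simp [mul_smul_comm, smul_mul_assoc, mul_assoc]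
  have hnrm0 : ∀ k : ℕ, nrm k ≠ 0 := by
    intro k hk
    have := hnrm k
    rw [hk] at this
    exact (mul_ne_zero (Nat.cast_ne_zero.mpr k.factorial_ne_zero)
      (pow_ne_zero _ hc0)) (by simpa using this.symm)
  refine ⟨fun p q r s hqr => by rw [prod, if_neg hqr, zero_smul],
    fun p q s => by rw [prod, if_pos rfl], fun p q r s => ?_⟩
  rw [hE, hE, smul_mul_assoc, mul_smul_comm, prod, smul_smul, smul_smul]
  by_cases hqr : q = r
  · subst hqr
    rw [if_pos rfl, if_pos rfl, hE]
    congr 1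
    rw [← hnrm q]
    have hp := hnrm0 p
    have hq := hnrm0 q
    have hs := hnrm0 s
    field_simp
  · rw [if_neg hqr, if_neg hqr, mul_zero, zero_smul]
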